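/- For a 132-avoiding permutation π with inversion-table partition ρ (nonzero entries of the weakly decreasing inversion table), π avoids 321 if and only if all parts of ρ are equal. Consequently, the number of indecomposable permutations with exactly k ≥ 1 inversions avoiding both 132 and 321 equals the number of divisors of k. -/

import Mathlib

def inversions {n : ℕ} (π : Equiv.Perm (Fin n)) : ℕ :=
  (Finset.univ.filter fun p : Fin n × Fin n => p.1 < p.2 ∧ π p.2 < π p.1).card

def Decomposable {n : ℕ} (π : Equiv.Perm (Fin n)) : Prop :=
  ∃ j : ℕ, 0 < j ∧ j < n ∧ ∀ i : Fin n, (i : ℕ) < j → (π i : ℕ) < j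

def Indecomposable {n : ℕ} (π : Equiv.Perm (Fin n)) : Prop :=
  0 < n ∧ ¬ Decomposable π

def invTable {n : ℕ} (π : Equiv.Perm (Fin n)) (i : Fin n) : ℕ :=
  (Finset.univ.filter fun j : Fin n => i < j ∧ π j < π i).card

def Avoids123 {n : ℕ} (π : Equiv.Perm (Fin n)) : Prop :=
  ¬ ∃ i j k : Fin n, i < j ∧ j < k ∧ π i < π j ∧ π j < π k

def Avoids132 {n : ℕ} (π : Equiv.Perm (Fin n)) : Prop :=
  ¬ ∃ i j k : Fin n, i < j ∧ j < k ∧ π i < π k ∧ π k < π j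

def Avoids213 {n : ℕ} (π : Equiv.Perm (Fin n)) : Prop :=
  ¬ ∃ i j k : Fin n, i < j ∧ j < k ∧ π j < π i ∧ π i < π k

def Avoids231 {n : ℕ} (π : Equiv.Perm (Fin n)) : Prop :=
  ¬ ∃ i j k : Fin n, i < j ∧ j < k ∧ π k < π i ∧ π i < π j

def Avoids312 {n : ℕ} (π : Equiv.Perm (Fin n)) : Prop :=
  ¬ ∃ i j k : Fin n, i < j ∧ j < k ∧ π j < π k ∧ π k < π i

def Avoids321 {n : ℕ} (π : Equiv.Perm (Fin n)) : Prop :=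
  ¬ ∃ i j k : Fin n, i < j ∧ j < k ∧ π k < π j ∧ π j < π i

def LTRMax {n : ℕ} (π : Equiv.Perm (Fin n)) (k : Fin n) : Prop :=
  ∀ i : Fin n, i < k → π i < π k

def revComp {n : ℕ} (π : Equiv.Perm (Fin n)) : Equiv.Perm (Fin n) :=
  Fin.revPerm * π * Fin.revPerm


section AuxProofs

lemma fin_filter_lt_card {n : ℕ} (m : ℕ) (h : m ≤ n) :
    (Finset.univ.filter fun i : Fin n => (i : ℕ) < m).card = m := by
  rw [← Finset.card_range m, ← Finset.card_image_of_injective _ Fin.val_injective]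
  congr 1
  ext x
  simp only [Finset.mem_image, Finset.mem_filter, Finset.mem_univ, true_and, Finset.mem_range,
    Finset.card_range]
  constructor
  · rintro ⟨i, hi, rfl⟩; exact hi
  · intro hx; exact ⟨⟨x, lt_of_lt_of_le hx h⟩, hx, rfl⟩

lemma fin_filter_ge_card {n : ℕ} (m : ℕ) (h : m ≤ n) :
    (Finset.univ.filter fun i : Fin n => m ≤ (i : ℕ)).card = n - m := by
  have h2 := Finset.card_filter_add_card_filter_not (s := (Finset.univ : Finset (Fin n)))
    (p := fun i : Fin n => (i : ℕ) < m)
  rw [fin_filter_lt_card m h] at h2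
  have : (Finset.univ.filter fun i : Fin n => ¬ (i : ℕ) < m) =
      (Finset.univ.filter fun i : Fin n => m ≤ (i : ℕ)) := by
    apply Finset.filter_congr; intro i _; simp [not_lt]
  rw [this] at h2
  simp only [Finset.card_univ, Fintype.card_fin] at h2
  omega

/-- `π` has the "rotation form" with parameters `m`, `a`. -/
def RotForm {n : ℕ} (π : Equiv.Perm (Fin n)) (m a : ℕ) : Prop :=
  n = m + a ∧ 1 ≤ m ∧ 1 ≤ a ∧
    ∀ i : Fin n, (π i : ℕ) = if (i : ℕ) < m then (i : ℕ) + a else (i : ℕ) - m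

lemma RotForm.avoids132 {n : ℕ} {π : Equiv.Perm (Fin n)} {m a : ℕ}
    (h : RotForm π m a) : Avoids132 π := by
  obtain ⟨hn, hm, ha, hf⟩ := h
  rintro ⟨i, j, k, hij, hjk, h1, h2⟩
  have hi := hf i; have hj := hf j; have hk := hf k
  rw [Fin.lt_def] at hij hjk h1 h2
  rw [hi, hk] at h1; rw [hk, hj] at h2
  have hi2 := i.2; have hj2 := j.2; have hk2 := k.2
  split_ifs at h1 h2 <;> omega

lemma RotForm.avoids321 {n : ℕ} {π : Equiv.Perm (Fin n)} {m a : ℕ}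
    (h : RotForm π m a) : Avoids321 π := by
  obtain ⟨hn, hm, ha, hf⟩ := h
  rintro ⟨i, j, k, hij, hjk, h1, h2⟩
  have hi := hf i; have hj := hf j; have hk := hf k
  rw [Fin.lt_def] at hij hjk h1 h2
  rw [hj, hk] at h1; rw [hi, hj] at h2
  have hi2 := i.2; have hj2 := j.2; have hk2 := k.2
  split_ifs at h1 h2 <;> omega

lemma RotForm.indec {n : ℕ} {π : Equiv.Perm (Fin n)} {m a : ℕ}
    (h : RotForm π m a) : Indecomposable π := by
  obtain ⟨hn, hm, ha, hf⟩ := h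
  refine ⟨by omega, ?_⟩
  rintro ⟨j, hj0, hjn, hj⟩
  have h1 : ((π ⟨0, by omega⟩ : Fin n) : ℕ) < j := hj _ hj0
  rw [hf ⟨0, by omega⟩, if_pos (by show 0 < m; omega)] at h1
  simp only [] at h1
  have haj : a < j := by simpa using h1
  have hjm : m ≤ j := by
    by_contra hlt
    push_neg at hlt
    have h2 : ((π ⟨j - 1, by omega⟩ : Fin n) : ℕ) < j := hj _ (by simp; omega)
    rw [hf ⟨j - 1, by omega⟩, if_pos (by simp; omega)] at h2
    simp only [] at h2
    omega
  have h3 : ((π ⟨m - 1, by omega⟩ : Fin n) : ℕ) < j := hj _ (by simp; omega)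
  rw [hf ⟨m - 1, by omega⟩, if_pos (by simp; omega)] at h3
  simp only [] at h3
  omega

lemma RotForm.inv_count {n : ℕ} {π : Equiv.Perm (Fin n)} {m a : ℕ}
    (h : RotForm π m a) : inversions π = m * a := by
  obtain ⟨hn, hm, ha, hf⟩ := h
  have key : (Finset.univ.filter fun p : Fin n × Fin n => p.1 < p.2 ∧ π p.2 < π p.1)
      = (Finset.univ.filter fun i : Fin n => (i : ℕ) < m) ×ˢ
        (Finset.univ.filter fun i : Fin n => m ≤ (i : ℕ)) := by
    ext ⟨i, j⟩
    simp only [Finset.mem_filter, Finset.mem_univ, true_and, Finset.mem_product]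
    have hi := hf i; have hj := hf j
    have hi2 := i.2; have hj2 := j.2
    rw [Fin.lt_def, Fin.lt_def, hi, hj]
    split_ifs <;> omega
  unfold inversions
  rw [key, Finset.card_product, fin_filter_lt_card m (by omega),
    fin_filter_ge_card m (by omega)]
  have : n - m = a := by omega
  rw [this]

def rotP (m a : ℕ) : Equiv.Perm (Fin (m + a)) where
  toFun i := ⟨(i.1 + a) % (m + a), Nat.mod_lt _ (Nat.lt_of_le_of_lt (Nat.zero_le _) i.2)⟩
  invFun i := ⟨(i.1 + m) % (m + a), Nat.mod_lt _ (Nat.lt_of_le_of_lt (Nat.zero_le _) i.2)⟩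
  left_inv i := by
    apply Fin.ext
    simp only [Nat.mod_add_mod]
    rw [add_assoc, add_comm a m, Nat.add_mod_right]
    exact Nat.mod_eq_of_lt i.2
  right_inv i := by
    apply Fin.ext
    simp only [Nat.mod_add_mod]
    rw [add_assoc, Nat.add_mod_right]
    exact Nat.mod_eq_of_lt i.2

lemma rotP_form {m a : ℕ} (hm : 1 ≤ m) (ha : 1 ≤ a) : RotForm (rotP m a) m a := by
  refine ⟨rfl, hm, ha, ?_⟩
  intro i
  have hi2 := i.2
  show (i.1 + a) % (m + a) = _
  split_ifs with h
  · exact Nat.mod_eq_of_lt (by omega)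
  · rw [Nat.mod_eq_sub_mod (by omega), Nat.mod_eq_of_lt (by omega)]
    omega

lemma rotform_sigma_eq {n m a : ℕ} (π : Equiv.Perm (Fin n)) (h : RotForm π m a) :
    (⟨n, π⟩ : Σ n : ℕ, Equiv.Perm (Fin n)) = ⟨m + a, rotP m a⟩ := by
  obtain ⟨hn, hm, ha, hf⟩ := h
  subst hn
  have hπ : π = rotP m a := by
    apply Equiv.ext; intro i; apply Fin.ext
    rw [hf i, (rotP_form hm ha).2.2.2 i]
  rw [hπ]

/-- extract `π 0` from a sigma pair -/
def val0 (p : Σ n : ℕ, Equiv.Perm (Fin n)) : ℕ :=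
  if h : 0 < p.1 then ((p.2 ⟨0, h⟩ : Fin p.1) : ℕ) else 0

lemma val0_rotP {m a : ℕ} (hm : 1 ≤ m) (ha : 1 ≤ a) :
    val0 ⟨m + a, rotP m a⟩ = a := by
  rw [val0, dif_pos (by omega : (0:ℕ) < m + a)]
  rw [(rotP_form hm ha).2.2.2 ⟨0, by omega⟩, if_pos (by show 0 < m; omega)]
  simp



lemma nat_structure (n : ℕ) (f : ℕ → ℕ)
    (hlt : ∀ i, i < n → f i < n)
    (hinj : ∀ i j, i < n → j < n → f i = f j → i = j)
    (hsurj : ∀ v, v < n → ∃ i, i < n ∧ f i = v)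
    (h132 : ∀ i j k, k < n → i < j → j < k → f i < f k → f k < f j → False)
    (h321 : ∀ i j k, k < n → i < j → j < k → f k < f j → f j < f i → False)
    (hnd : ∀ j, 0 < j → j < n → ∃ i, i < j ∧ j ≤ f i)
    (hn2 : 2 ≤ n) :
    ∃ m a, n = m + a ∧ 1 ≤ m ∧ 1 ≤ a ∧
      ∀ i, i < n → f i = if i < m then i + a else i - m := by
  have han : f 0 < n := hlt 0 (by omega)
  have ha1 : 1 ≤ f 0 := by
    by_contra h0
    push_neg at h0
    obtain ⟨i, hi, hfi⟩ := hnd 1 (by omega) (by omega)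
    interval_cases i
    omega
  have stepA : ∀ i, i < n - f 0 → f i = f 0 + i := by
    intro i
    induction i using Nat.strong_induction_on with
    | _ i ih =>
      intro hi
      match i with
      | 0 => omega
      | p + 1 =>
        have hfp := ih p (by omega) (by omega)
        have hbn : f (p + 1) < n := hlt (p + 1) (by omega)
        have hbmid : ¬ (f 0 ≤ f (p + 1) ∧ f (p + 1) ≤ f 0 + p) := by
          rintro ⟨h1, h2⟩
          have h3 := ih (f (p + 1) - f 0) (by omega) (by omega)
          have h4 := hinj (f (p + 1) - f 0) (p + 1) (by omega) (by omega) (by omega)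
          omega
        rcases lt_trichotomy (f (p + 1)) (f 0 + (p + 1)) with hcase | hcase | hcase
        · -- f (p+1) < f 0
          have hba : f (p + 1) < f 0 := by omega
          by_cases hb0 : f (p + 1) = 0
          · -- would be decomposable at p + 1 + f 0
            exfalso
            obtain ⟨i0, hi0, hfi0⟩ := hnd (p + 1 + f 0) (by omega) (by omega)
            rcases lt_trichotomy i0 (p + 1) with hc | hc | hc
            · have := ih i0 (by omega) (by omega)
              omega
            · rw [← hc] at hb0; omega
            · -- p + 1 < i0 < p + 1 + f 0, but f i0 ≥ p + 1 + f 0 ≥ f 0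
              have hcount : (Finset.range n).filter (fun x => f x < f 0) ⊆
                  Finset.Ico (p + 1) i0 := by
                intro x hx
                simp only [Finset.mem_filter, Finset.mem_range, Finset.mem_Ico] at hx ⊢
                obtain ⟨hxn, hxa⟩ := hx
                have hx1 : p + 1 ≤ x := by
                  by_contra hxc
                  push_neg at hxc
                  have := ih x (by omega) (by omega)
                  omega
                refine ⟨hx1, ?_⟩
                rcases lt_trichotomy x i0 with hd | hd | hd
                · exact hd
                · rw [hd] at hxa; omega
                · exfalso
                  have hfx0 : f x ≠ 0 := by
                    intro hz
                    have := hinj x (p + 1) (by omega) (by omega) (by omega)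
                    omega
                  exact h132 (p + 1) i0 x (by omega) (by omega) (by omega)
                    (by omega) (by omega)
              have hcard : ((Finset.range n).filter (fun x => f x < f 0)).card
                  = (Finset.range (f 0)).card := by
                apply Finset.card_bij (fun x _ => f x)
                · intro x hx
                  simp only [Finset.mem_filter, Finset.mem_range] at hx ⊢
                  exact hx.2
                · intro x1 h1 x2 h2 h
                  simp only [Finset.mem_filter, Finset.mem_range] at h1 h2
                  exact hinj x1 x2 h1.1 h2.1 h
                · intro v hv
                  simp only [Finset.mem_range] at hv
                  obtain ⟨x, hx, hfx⟩ := hsurj v (by omega)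
                  exact ⟨x, by simp only [Finset.mem_filter, Finset.mem_range]; omega, hfx⟩
              rw [Finset.card_range] at hcard
              have := Finset.card_le_card hcount
              rw [hcard, Nat.card_Ico] at this
              omega
          · -- 0 < f (p+1) < f 0 : value f (p+1) - 1 sits after p + 1 → 321
            exfalso
            obtain ⟨r, hrn, hrv⟩ := hsurj (f (p + 1) - 1) (by omega)
            rcases lt_trichotomy r (p + 1) with hc | hc | hc
            · have := ih r (by omega) (by omega)
              omega
            · rw [hc] at hrv; omega
            · exact h321 p (p + 1) r (by omega) (by omega) (by omega) (by omega) (by omega)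
        · exact hcase
        · -- f (p+1) > f 0 + p + 1 : value f 0 + p + 1 sits after p + 1 → 132
          exfalso
          obtain ⟨r, hrn, hrv⟩ := hsurj (f 0 + p + 1) (by omega)
          rcases lt_trichotomy r (p + 1) with hc | hc | hc
          · have := ih r (by omega) (by omega)
            omega
          · rw [hc] at hrv; omega
          · exact h132 p (p + 1) r (by omega) (by omega) (by omega) (by omega) (by omega)
  have stepC : ∀ t, t < f 0 → f (n - f 0 + t) = t := by
    intro t
    induction t using Nat.strong_induction_on with
    | _ t ih =>
      intro ht
      have hbn : f (n - f 0 + t) < n := hlt _ (by omega)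
      have hbsmall : f (n - f 0 + t) < f 0 := by
        by_contra hc
        push_neg at hc
        have h3 := stepA (f (n - f 0 + t) - f 0) (by omega)
        have h4 := hinj (f (n - f 0 + t) - f 0) (n - f 0 + t) (by omega) (by omega) (by omega)
        omega
      have hbge : t ≤ f (n - f 0 + t) := by
        by_contra hc
        push_neg at hc
        have h3 := ih (f (n - f 0 + t)) hc (by omega)
        have h4 := hinj (n - f 0 + f (n - f 0 + t)) (n - f 0 + t) (by omega) (by omega) (by omega)
        omega
      rcases Nat.eq_or_lt_of_le hbge with hcase | hcase
      · omega
      · exfalso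
        obtain ⟨r, hrn, hrv⟩ := hsurj t (by omega)
        have hr1 : ¬ r < n - f 0 := by
          intro hc
          have := stepA r (by omega)
          omega
        rcases lt_trichotomy r (n - f 0 + t) with hc | hc | hc
        · have h3 := ih (r - (n - f 0)) (by omega) (by omega)
          have h4 : n - f 0 + (r - (n - f 0)) = r := by omega
          rw [h4] at h3
          omega
        · rw [hc] at hrv; omega
        · exact h321 0 (n - f 0 + t) r (by omega) (by omega) (by omega) (by omega) (by omega)
  refine ⟨n - f 0, f 0, by omega, by omega, ha1, ?_⟩
  intro i hi
  split_ifs with h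
  · have := stepA i (by omega)
    omega
  · have h3 := stepC (i - (n - f 0)) (by omega)
    have h4 : n - f 0 + (i - (n - f 0)) = i := by omega
    rw [h4] at h3
    omega


lemma structure_thm {n : ℕ} (π : Equiv.Perm (Fin n)) (h132 : Avoids132 π)
    (h321 : Avoids321 π) (hind : Indecomposable π) (hn2 : 2 ≤ n) :
    ∃ m a, RotForm π m a := by
  classical
  obtain ⟨f, hfeq⟩ : ∃ f : ℕ → ℕ, ∀ (i : ℕ) (h : i < n), f i = ((π ⟨i, h⟩ : Fin n) : ℕ) :=
    ⟨fun i => if h : i < n then ((π ⟨i, h⟩ : Fin n) : ℕ) else 0, fun i h => dif_pos h⟩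
  have hfeq' : ∀ x : Fin n, f (x : ℕ) = ((π x : Fin n) : ℕ) := by
    intro x
    rw [hfeq (x : ℕ) x.2]
  have hlt : ∀ i, i < n → f i < n := by
    intro i h
    rw [hfeq i h]
    exact (π ⟨i, h⟩).2
  have hinj : ∀ i j, i < n → j < n → f i = f j → i = j := by
    intro i j hi hj hf
    rw [hfeq i hi, hfeq j hj] at hf
    exact congrArg Fin.val (π.injective (Fin.ext hf))
  have hsurj : ∀ v, v < n → ∃ i, i < n ∧ f i = v := by
    intro v hv
    refine ⟨((π.symm ⟨v, hv⟩ : Fin n) : ℕ), (π.symm ⟨v, hv⟩).2, ?_⟩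
    rw [hfeq' (π.symm ⟨v, hv⟩), Equiv.apply_symm_apply]
  have h132' : ∀ i j k, k < n → i < j → j < k → f i < f k → f k < f j → False := by
    intro i j k hk hij hjk h1 h2
    apply h132
    refine ⟨⟨i, by omega⟩, ⟨j, by omega⟩, ⟨k, hk⟩, ?_, ?_, ?_, ?_⟩
    · exact Fin.mk_lt_mk.mpr hij
    · exact Fin.mk_lt_mk.mpr hjk
    · rw [Fin.lt_def, ← hfeq i (by omega), ← hfeq k hk]; exact h1
    · rw [Fin.lt_def, ← hfeq k hk, ← hfeq j (by omega)]; exact h2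
  have h321' : ∀ i j k, k < n → i < j → j < k → f k < f j → f j < f i → False := by
    intro i j k hk hij hjk h1 h2
    apply h321
    refine ⟨⟨i, by omega⟩, ⟨j, by omega⟩, ⟨k, hk⟩, ?_, ?_, ?_, ?_⟩
    · exact Fin.mk_lt_mk.mpr hij
    · exact Fin.mk_lt_mk.mpr hjk
    · rw [Fin.lt_def, ← hfeq k hk, ← hfeq j (by omega)]; exact h1
    · rw [Fin.lt_def, ← hfeq j (by omega), ← hfeq i (by omega)]; exact h2
  have hnd : ∀ j, 0 < j → j < n → ∃ i, i < j ∧ j ≤ f i := by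
    intro j hj0 hjn
    by_contra hcon
    push_neg at hcon
    apply hind.2
    refine ⟨j, hj0, hjn, ?_⟩
    intro x hx
    rw [← hfeq' x]
    exact hcon (x : ℕ) hx
  obtain ⟨m, a, hma1, hma2, hma3, hform⟩ :=
    nat_structure n f hlt hinj hsurj h132' h321' hnd hn2
  refine ⟨m, a, hma1, hma2, hma3, ?_⟩
  intro x
  rw [← hfeq' x]
  exact hform (x : ℕ) x.2

lemma inversions_one (π : Equiv.Perm (Fin 1)) : inversions π = 0 := by
  unfold inversions
  rw [Finset.card_eq_zero, Finset.filter_eq_empty_iff]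
  rintro ⟨p1, p2⟩ -
  have h : p1 = p2 := Subsingleton.elim _ _
  rintro ⟨h1, -⟩
  rw [h] at h1
  exact lt_irrefl _ h1

lemma part1_forward_aux {n : ℕ} (π : Equiv.Perm (Fin n)) (h132 : Avoids132 π)
    (h321 : Avoids321 π) {i j : Fin n} (hij : i < j) (hj : invTable π j ≠ 0) :
    invTable π i = invTable π j := by
  obtain ⟨kj, hkj⟩ := Finset.card_pos.mp (Nat.pos_of_ne_zero hj)
  rw [Finset.mem_filter] at hkj
  obtain ⟨-, hjkj, hπkj⟩ := hkj
  have hππ : π i < π j := by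
    rcases lt_trichotomy (π i) (π j) with h | h | h
    · exact h
    · exact absurd (π.injective h) (ne_of_lt hij)
    · exact absurd ⟨i, j, kj, hij, hjkj, hπkj, h⟩ h321
  unfold invTable
  congr 1
  ext l
  simp only [Finset.mem_filter, Finset.mem_univ, true_and]
  constructor
  · rintro ⟨hil, hl⟩
    have hjl : j < l := by
      rcases lt_trichotomy l j with h | h | h
      · exfalso
        rcases lt_trichotomy (π kj) (π l) with h2 | h2 | h2
        · exact h321 ⟨i, l, kj, hil, h.trans hjkj, h2, hl⟩
        · exact absurd (π.injective h2) (ne_of_gt (h.trans hjkj))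
        · exact h132 ⟨l, j, kj, h, hjkj, h2, hπkj⟩
      · rw [h] at hl
        exact absurd hππ (lt_asymm hl)
      · exact h
    exact ⟨hjl, hl.trans hππ⟩
  · rintro ⟨hjl, hl⟩
    refine ⟨hij.trans hjl, ?_⟩
    rcases lt_trichotomy (π l) (π i) with h | h | h
    · exact h
    · exact absurd (π.injective h) (ne_of_gt (hij.trans hjl))
    · exact absurd ⟨i, j, l, hij, hjl, h, hl⟩ h132

lemma part1_back {n : ℕ} (π : Equiv.Perm (Fin n))
    (heq : ∀ i j : Fin n, invTable π i ≠ 0 → invTable π j ≠ 0 →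
      invTable π i = invTable π j) : Avoids321 π := by
  rintro ⟨i, j, k, hij, hjk, h1, h2⟩
  have hjmem : k ∈ Finset.univ.filter (fun l => j < l ∧ π l < π j) := by
    simp only [Finset.mem_filter, Finset.mem_univ, true_and]
    exact ⟨hjk, h1⟩
  have himem : j ∈ Finset.univ.filter (fun l => i < l ∧ π l < π i) := by
    simp only [Finset.mem_filter, Finset.mem_univ, true_and]
    exact ⟨hij, h2⟩
  have hins : insert j (Finset.univ.filter (fun l => j < l ∧ π l < π j)) ⊆
      Finset.univ.filter (fun l => i < l ∧ π l < π i) := by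
    intro l hl
    rcases Finset.mem_insert.mp hl with rfl | hl
    · exact himem
    · simp only [Finset.mem_filter, Finset.mem_univ, true_and] at hl ⊢
      exact ⟨hij.trans hl.1, hl.2.trans h2⟩
  have hcard := Finset.card_le_card hins
  rw [Finset.card_insert_of_notMem (by simp)] at hcard
  have h5 := heq i j (by unfold invTable; exact Finset.card_ne_zero_of_mem himem)
    (by unfold invTable; exact Finset.card_ne_zero_of_mem hjmem)
  unfold invTable at h5
  omega

end AuxProofs

/-- For a 132-avoiding permutation, avoiding 321 is equivalent to all nonzero
entries of its inversion table being equal. Consequently, for `k ≥ 1` the number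
of indecomposable permutations with exactly `k` inversions avoiding 132 and 321
equals the number of divisors of `k`. -/
theorem avoids321_iff_equal_parts_and_count :
    (∀ (n : ℕ) (π : Equiv.Perm (Fin n)), Avoids132 π →
      (Avoids321 π ↔ ∀ i j : Fin n, invTable π i ≠ 0 → invTable π j ≠ 0 →
        invTable π i = invTable π j)) ∧
    (∀ k : ℕ, 1 ≤ k →
      Nat.card {p : Σ n : ℕ, Equiv.Perm (Fin n) //
          Indecomposable p.2 ∧ inversions p.2 = k ∧ Avoids132 p.2 ∧ Avoids321 p.2}
        = k.divisors.card) := by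
  constructor
  · -- Part 1
    intro n π h132
    constructor
    · intro h321 i j hi hj
      rcases lt_trichotomy i j with h | h | h
      · exact part1_forward_aux π h132 h321 h hj
      · rw [h]
      · exact (part1_forward_aux π h132 h321 h hi).symm
    · exact part1_back π
  · -- Part 2
    intro k hk
    classical
    have hmem : ∀ d : ℕ, d ∈ k.divisors → 1 ≤ d ∧ 1 ≤ k / d ∧ k / d * d = k := by
      intro d hd
      obtain ⟨hdvd, hk0⟩ := Nat.mem_divisors.mp hd
      have hd0 : 0 < d := Nat.pos_of_mem_divisors hd
      exact ⟨hd0, Nat.div_pos (Nat.le_of_dvd (by omega) hdvd) hd0, Nat.div_mul_cancel hdvd⟩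
    set F : {d : ℕ // d ∈ k.divisors} → {p : Σ n : ℕ, Equiv.Perm (Fin n) //
        Indecomposable p.2 ∧ inversions p.2 = k ∧ Avoids132 p.2 ∧ Avoids321 p.2} :=
      fun d => ⟨⟨k / d.1 + d.1, rotP (k / d.1) d.1⟩, by
        obtain ⟨h1, h2, h3⟩ := hmem d.1 d.2
        have hform := rotP_form h2 h1
        exact ⟨hform.indec, by rw [hform.inv_count]; exact h3,
          hform.avoids132, hform.avoids321⟩⟩ with hF
    have hbij : Function.Bijective F := by
      constructor
      · intro d d' hdd
        have h0 := congrArg (fun x => val0 x.1) hdd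
        obtain ⟨h1, h2, h3⟩ := hmem d.1 d.2
        obtain ⟨h1', h2', h3'⟩ := hmem d'.1 d'.2
        simp only [hF] at h0
        rw [val0_rotP h2 h1, val0_rotP h2' h1'] at h0
        exact Subtype.ext h0
      · rintro ⟨⟨n, π⟩, hind, hinv, h132, h321⟩
        have hn0 : 0 < n := hind.1
        have hn2 : 2 ≤ n := by
          rcases Nat.lt_or_ge n 2 with h | h
          · exfalso
            have hn1 : n = 1 := by omega
            subst hn1
            rw [inversions_one] at hinv
            omega
          · exact h
        obtain ⟨m, a, hform⟩ := structure_thm π h132 h321 hind hn2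
        have hk' : k = m * a := by rw [← hinv, hform.inv_count]
        have hdvd : a ∣ k := ⟨m, by rw [hk', mul_comm]⟩
        have hamem : a ∈ k.divisors := Nat.mem_divisors.mpr ⟨hdvd, by omega⟩
        refine ⟨⟨a, hamem⟩, ?_⟩
        apply Subtype.ext
        simp only [hF]
        have hka : k / a = m := by
          rw [hk']
          exact Nat.mul_div_cancel m hform.2.2.1
        rw [hka]
        exact (rotform_sigma_eq π hform).symm
    rw [← Nat.card_eq_of_bijective F hbij, Nat.card_eq_finsetCard]
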